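/- Let 𝒥⁺, 𝒥⁻ be partitions of [1,n] into intervals with π⁺ ∪ π⁻ = π, and let σ⁺, σ⁻ be involutions of [1,n]. Let (x_1,…,x_e; τ) be an edge for (σ⁺,σ⁻) such that ε_i β_i ∈ R for every 1 ≤ i ≤ e−1 and such that no x_i with 1 < i < e is an internal turning point. If x_1 and x_e do not lie in a common double component (there is no pair J⁺ ∈ 𝒥⁺, J⁻ ∈ 𝒥⁻ with x_1, x_e ∈ J⁺ ∩ J⁻), then ε_1 = ε_2 = … = ε_{e−1} and ε_1(ε_{x_1} − ε_{x_e}) ∈ −R_*. (Corollary 3.8.4, with the conclusion of Proposition 3.8.4 on the end-points made an explicit hypothesis.) -/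

import Mathlib

open Pointwise

noncomputable def eps (n : ℕ) (i : Fin n) : Fin n → ℝ := Pi.single i 1

/-- The roots of `sl_n`: `ε_i - ε_j` for `i ≠ j`. -/
def Delta (n : ℕ) : Set (Fin n → ℝ) :=
  {v | ∃ i j : Fin n, i ≠ j ∧ v = eps n i - eps n j}

/-- The positive roots: `ε_i - ε_j` for `i < j`. -/
def DeltaPos (n : ℕ) : Set (Fin n → ℝ) :=
  {v | ∃ i j : Fin n, i < j ∧ v = eps n i - eps n j}

/-- The negative roots. -/
def DeltaNeg (n : ℕ) : Set (Fin n → ℝ) := -DeltaPos n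

/-- The simple roots `α_i = ε_i - ε_{i+1}`. -/
def simpleRoots (n : ℕ) : Set (Fin n → ℝ) :=
  {v | ∃ i j : Fin n, (j : ℕ) = (i : ℕ) + 1 ∧ v = eps n i - eps n j}

/-- The set of ℕ-linear combinations of elements of `S`. -/
def Nspan {n : ℕ} (S : Set (Fin n → ℝ)) : Set (Fin n → ℝ) :=
  (AddSubmonoid.closure S : AddSubmonoid (Fin n → ℝ))

/-- `R = (ℕπ⁺ ∪ (−ℕπ⁻)) ∩ Δ`. -/
def Rset (n : ℕ) (Pp Pm : Set (Fin n → ℝ)) : Set (Fin n → ℝ) :=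
  (Nspan Pp ∪ -Nspan Pm) ∩ Delta n

/-- `K = Δ \ R`. -/
def Kset (n : ℕ) (Pp Pm : Set (Fin n → ℝ)) : Set (Fin n → ℝ) :=
  Delta n \ Rset n Pp Pm

/-- `M = R ∩ (−R)`. -/
def Mset (n : ℕ) (Pp Pm : Set (Fin n → ℝ)) : Set (Fin n → ℝ) :=
  Rset n Pp Pm ∩ -Rset n Pp Pm

/-- `R_* = (−R) \ M`. -/
def RstarSet (n : ℕ) (Pp Pm : Set (Fin n → ℝ)) : Set (Fin n → ℝ) :=
  -Rset n Pp Pm \ Mset n Pp Pm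

/-- A partition of `[1,n]` (as `Fin n`) into (nonempty) intervals. -/
def IsIntervalPartitionF (n : ℕ) (J : Set (Set (Fin n))) : Prop :=
  (∀ I ∈ J, ∃ a b : Fin n, a ≤ b ∧ I = Set.Icc a b) ∧
  (⋃₀ J = Set.univ) ∧
  (∀ I ∈ J, ∀ I' ∈ J, I ≠ I' → Disjoint I I')

/-- The set `π` of simple roots `α_i` such that `i` and `i+1` lie in a common component of the
partition `J`. -/
def piOf (n : ℕ) (J : Set (Set (Fin n))) : Set (Fin n → ℝ) :=
  {v | ∃ i j : Fin n, (j : ℕ) = (i : ℕ) + 1 ∧ v = eps n i - eps n j ∧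
    ∃ I ∈ J, i ∈ I ∧ j ∈ I}

/-- An edge for the pair of involutions `(σp, σm)`: a sequence `x 0, …, x (e−1)` of distinct
points with alternating labels `τ 0, …, τ (e−2)` (`true` = `+`), where consecutive points are
exchanged by the corresponding involution, and the two end-points are fixed by the involution
of opposite sign to the adjacent label. (Indices are 0-based.) -/
def IsEdge {n : ℕ} (e : ℕ) (σp σm : Fin n → Fin n) (x : ℕ → Fin n) (τ : ℕ → Bool) : Prop :=
  2 ≤ e ∧
  (∀ i j, i < e → j < e → x i = x j → i = j) ∧
  (∀ i, i + 2 < e → τ (i + 1) = !(τ i)) ∧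
  (∀ i, i + 1 < e → x (i + 1) = (if τ i then σp else σm) (x i) ∧ x (i + 1) ≠ x i) ∧
  (if τ 0 then σm else σp) (x 0) = x 0 ∧
  (if τ (e - 2) then σm else σp) (x (e - 1)) = x (e - 1)

/-- `x i` is an internal turning point: `0 < i < e − 1` and `x i − x (i−1)` and
`x i − x (i+1)` have opposite signs. -/
def InternalTP {n : ℕ} (e : ℕ) (x : ℕ → Fin n) (i : ℕ) : Prop :=
  0 < i ∧ i + 1 < e ∧
    (((x i : ℕ) : ℤ) - ((x (i - 1) : ℕ) : ℤ)) * (((x i : ℕ) : ℤ) - ((x (i + 1) : ℕ) : ℤ)) < 0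

/-- A turning point of the edge: one of the two end-points, or an internal turning point. -/
def TurningPt {n : ℕ} (e : ℕ) (x : ℕ → Fin n) (i : ℕ) : Prop :=
  i = 0 ∨ i = e - 1 ∨ InternalTP e x i

/-- The sign convention: `ε_i ∈ {1, −1}` is defined by `ε_i β_i ∈ Δ⁺` if `τ_i = +` and
`ε_i β_i ∈ Δ⁻` if `τ_i = −`, where `β_i = ε_{x_i} − ε_{x_{i+1}}`. -/
def SignConv {n : ℕ} (e : ℕ) (x : ℕ → Fin n) (τ : ℕ → Bool) (εf : ℕ → ℤ) : Prop :=
  ∀ i, i + 1 < e → (εf i = 1 ∨ εf i = -1) ∧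
    (τ i = true → (εf i : ℝ) • (eps n (x i) - eps n (x (i + 1))) ∈ DeltaPos n) ∧
    (τ i = false → (εf i : ℝ) • (eps n (x i) - eps n (x (i + 1))) ∈ DeltaNeg n)

namespace Stmt12

variable {n : ℕ}

noncomputable def F (k : Fin n) (v : Fin n → ℝ) : ℝ := ∑ j ∈ Finset.Iic k, v j

lemma F_add (k : Fin n) (v w : Fin n → ℝ) : F k (v + w) = F k v + F k w := by
  simp [F, Finset.sum_add_distrib]

lemma F_sub (k : Fin n) (v w : Fin n → ℝ) : F k (v - w) = F k v - F k w := by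
  simp [F, Finset.sum_sub_distrib]

lemma F_eps (k i : Fin n) : F k (eps n i) = if i ≤ k then 1 else 0 := by
  simp only [F, eps, Pi.single_apply]
  rw [Finset.sum_ite_eq' (Finset.Iic k) i (fun _ => (1:ℝ))]
  simp

lemma nspan_F (J : Set (Set (Fin n))) (k k' : Fin n) (hk' : (k' : ℕ) = (k : ℕ) + 1)
    {v : Fin n → ℝ} (hv : v ∈ Nspan (piOf n J)) :
    0 ≤ F k v ∧ (0 < F k v → ∃ I ∈ J, k ∈ I ∧ k' ∈ I) := by
  have hv' : v ∈ AddSubmonoid.closure (piOf n J) := hv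
  clear hv
  induction hv' using AddSubmonoid.closure_induction with
  | mem g hg =>
      obtain ⟨i, j, hij, rfl, I, hI, hiI, hjI⟩ := hg
      rw [F_sub, F_eps, F_eps]
      by_cases hjk : j ≤ k
      · have hik : i ≤ k := le_trans (by rw [Fin.le_def]; omega) hjk
        simp [hik, hjk]
      · by_cases hik : i ≤ k
        · have hki : (k : ℕ) = (i : ℕ) := by
            rw [Fin.le_def] at hik
            rw [Fin.not_le, Fin.lt_def] at hjk
            omega
          have : k = i := Fin.ext hki
          have : k' = j := Fin.ext (by omega)
          subst ‹k = i›; subst ‹k' = j›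
          constructor
          · simp [hik, hjk]
          · exact fun _ => ⟨I, hI, hiI, hjI⟩
        · simp [hik, hjk]
  | zero => simp [F]
  | add a b ha hb iha ihb =>
      rw [F_add]
      constructor
      · exact add_nonneg iha.1 ihb.1
      · intro h
        rcases lt_or_ge 0 (F k a) with h1 | h1
        · exact iha.2 h1
        · exact ihb.2 (by linarith [iha.1])

lemma eps_chain (J : Set (Set (Fin n))) :
    ∀ (m : ℕ) (c d : Fin n), (d : ℕ) = (c : ℕ) + m + 1 →
    (∀ k k' : Fin n, (k' : ℕ) = (k : ℕ) + 1 → c ≤ k → k' ≤ d →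
      ∃ I ∈ J, k ∈ I ∧ k' ∈ I) →
    eps n c - eps n d ∈ Nspan (piOf n J) := by
  intro m
  induction m with
  | zero =>
      intro c d hd hyp
      apply AddSubmonoid.subset_closure
      exact ⟨c, d, hd, rfl, hyp c d hd (le_refl c) (le_refl d)⟩
  | succ m ih =>
      intro c d hd hyp
      have hd'lt : (c : ℕ) + m + 1 < n := by omega
      let d' : Fin n := ⟨(c : ℕ) + m + 1, hd'lt⟩
      have hval : (d' : ℕ) = (c : ℕ) + m + 1 := rfl
      have hd'd : (d : ℕ) = (d' : ℕ) + 1 := by rw [hval]; omega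
      have hd'le : d' ≤ d := by rw [Fin.le_def]; omega
      have h1 : eps n c - eps n d' ∈ Nspan (piOf n J) := by
        apply ih c d' rfl
        intro k k' hk hck hkd'
        exact hyp k k' hk hck (le_trans hkd' hd'le)
      have h2 : eps n d' - eps n d ∈ Nspan (piOf n J) := by
        apply AddSubmonoid.subset_closure
        exact ⟨d', d, hd'd, rfl, hyp d' d hd'd (by rw [Fin.le_def, hval]; omega) (le_refl d)⟩
      have := AddSubmonoid.add_mem _ h1 h2
      simpa [Nspan] using this

lemma common_comp (J : Set (Set (Fin n))) (hdisj : ∀ I ∈ J, ∀ I' ∈ J, I ≠ I' → Disjoint I I')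
    (hcov : ⋃₀ J = Set.univ) :
    ∀ (m : ℕ) (c d : Fin n), (d : ℕ) = (c : ℕ) + m →
    (∀ k k' : Fin n, (k' : ℕ) = (k : ℕ) + 1 → c ≤ k → k' ≤ d →
      ∃ I ∈ J, k ∈ I ∧ k' ∈ I) →
    ∃ I ∈ J, c ∈ I ∧ d ∈ I := by
  intro m
  induction m with
  | zero =>
      intro c d hd _
      have : c = d := Fin.ext (by omega)
      subst this
      have : c ∈ ⋃₀ J := by rw [hcov]; trivial
      obtain ⟨I, hI, hcI⟩ := this
      exact ⟨I, hI, hcI, hcI⟩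
  | succ m ih =>
      intro c d hd hyp
      have hd'lt : (c : ℕ) + m < n := by omega
      let d' : Fin n := ⟨(c : ℕ) + m, hd'lt⟩
      have hval : (d' : ℕ) = (c : ℕ) + m := rfl
      have hd'd : (d : ℕ) = (d' : ℕ) + 1 := by rw [hval]; omega
      have hd'le : d' ≤ d := by rw [Fin.le_def]; omega
      obtain ⟨I, hI, hcI, hd'I⟩ := ih c d' rfl (fun k k' hk hck hkd' =>
        hyp k k' hk hck (le_trans hkd' hd'le))
      obtain ⟨I', hI', hd'I', hdI'⟩ := hyp d' d hd'd
        (by rw [Fin.le_def, hval]; omega) (le_refl d)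
      have hII' : I = I' := by
        by_contra hne
        exact (Set.disjoint_left.1 (hdisj I hI I' hI' hne)) hd'I hd'I'
      exact ⟨I, hI, hcI, hII' ▸ hdI'⟩

lemma eps_eq_iff {a b p q : Fin n} (hab : a ≠ b)
    (h : eps n a - eps n b = eps n p - eps n q) : a = p ∧ b = q := by
  have ha := congrFun h a
  have hb := congrFun h b
  simp only [Pi.sub_apply, eps, Pi.single_apply] at ha hb
  rw [if_true, if_neg hab] at ha
  rw [if_true, if_neg (Ne.symm hab)] at hb
  constructor
  · by_contra hap
    rw [if_neg hap] at ha
    split_ifs at ha <;> norm_num at ha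
  · by_contra hbq
    rw [if_neg hbq] at hb
    split_ifs at hb <;> norm_num at hb

lemma main_case (Jp' Jm' : Set (Set (Fin n)))
    (hJpd : ∀ I ∈ Jp', ∀ I' ∈ Jp', I ≠ I' → Disjoint I I')
    (hJmd : ∀ I ∈ Jm', ∀ I' ∈ Jm', I ≠ I' → Disjoint I I')
    (hJpcov : ⋃₀ Jp' = Set.univ) (hJmcov : ⋃₀ Jm' = Set.univ)
    (c d : Fin n) (hcd : c < d)
    (u v : Fin n → ℝ) (hu : u ∈ Nspan (piOf n Jp')) (hv : v ∈ Nspan (piOf n Jm'))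
    (huv : u - v = eps n c - eps n d)
    (hnc : ∀ Ip ∈ Jp', ∀ Im ∈ Jm', c ∈ Ip → d ∈ Ip → c ∈ Im → d ∈ Im → False) :
    eps n c - eps n d ∈ Nspan (piOf n Jp') ∧
      (eps n d - eps n c ∈ Nspan (piOf n Jp') ∪ -Nspan (piOf n Jm') → False) := by
  have hcdn : (c : ℕ) < (d : ℕ) := hcd
  have hFw : ∀ k : Fin n, c ≤ k → (k : ℕ) < (d : ℕ) → F k (eps n c - eps n d) = 1 := by
    intro k hck hkd
    rw [F_sub, F_eps, F_eps, if_pos hck, if_neg (by rw [Fin.not_le, Fin.lt_def]; omega)]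
    norm_num
  have hcuts : ∀ k k' : Fin n, (k' : ℕ) = (k : ℕ) + 1 → c ≤ k → k' ≤ d →
      ∃ I ∈ Jp', k ∈ I ∧ k' ∈ I := by
    intro k k' hk hck hkd
    have hkd' : (k : ℕ) < (d : ℕ) := by rw [Fin.le_def] at hkd; omega
    have h1 := nspan_F Jp' k k' hk hu
    have h2 := nspan_F Jm' k k' hk hv
    have h3 : F k u - F k v = 1 := by rw [← F_sub, huv]; exact hFw k hck hkd'
    exact h1.2 (by linarith [h2.1])
  have mem1 : eps n c - eps n d ∈ Nspan (piOf n Jp') :=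
    eps_chain Jp' ((d : ℕ) - (c : ℕ) - 1) c d (by omega) hcuts
  refine ⟨mem1, ?_⟩
  intro hmem
  have hcommonP : ∃ I ∈ Jp', c ∈ I ∧ d ∈ I :=
    common_comp Jp' hJpd hJpcov ((d : ℕ) - (c : ℕ)) c d (by omega) hcuts
  rcases hmem with hmem | hmem
  · -- eps d - eps c ∈ Nspan Jp' : contradiction with nonnegativity at cut c
    have hc1 : (c : ℕ) + 1 < n := by omega
    have h1 := (nspan_F Jp' c ⟨(c : ℕ) + 1, hc1⟩ rfl hmem).1
    rw [F_sub, F_eps, F_eps, if_pos (le_refl c),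
      if_neg (by rw [Fin.not_le, Fin.lt_def]; omega)] at h1
    norm_num at h1
  · -- eps d - eps c ∈ -Nspan Jm' : then eps c - eps d ∈ Nspan Jm', common Jm' component
    rw [Set.mem_neg, neg_sub] at hmem
    have hcutsm : ∀ k k' : Fin n, (k' : ℕ) = (k : ℕ) + 1 → c ≤ k → k' ≤ d →
        ∃ I ∈ Jm', k ∈ I ∧ k' ∈ I := by
      intro k k' hk hck hkd
      have hkd' : (k : ℕ) < (d : ℕ) := by rw [Fin.le_def] at hkd; omega
      refine (nspan_F Jm' k k' hk hmem).2 ?_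
      rw [hFw k hck hkd']; norm_num
    have hcommonM : ∃ I ∈ Jm', c ∈ I ∧ d ∈ I :=
      common_comp Jm' hJmd hJmcov ((d : ℕ) - (c : ℕ)) c d (by omega) hcutsm
    obtain ⟨Ip, hIp, hcp, hdp⟩ := hcommonP
    obtain ⟨Im, hIm, hcm, hdm⟩ := hcommonM
    exact hnc Ip hIp Im hIm hcp hdp hcm hdm


lemma dir_pos {a b : Fin n} {s : ℤ} (hs : s = 1 ∨ s = -1) (hab : a ≠ b)
    (h : (s : ℝ) • (eps n a - eps n b) ∈ DeltaPos n) :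
    (s = 1 ∧ a < b) ∨ (s = -1 ∧ b < a) := by
  obtain ⟨p, q, hpq, heq⟩ := h
  rcases hs with rfl | rfl
  · left
    refine ⟨rfl, ?_⟩
    rw [Int.cast_one, one_smul] at heq
    obtain ⟨rfl, rfl⟩ := eps_eq_iff hab heq
    exact hpq
  · right
    refine ⟨rfl, ?_⟩
    have heq' : eps n b - eps n a = eps n p - eps n q := by
      rw [← heq]; push_cast; rw [neg_one_smul]; ring
    obtain ⟨rfl, rfl⟩ := eps_eq_iff (Ne.symm hab) heq'
    exact hpq

lemma dir_neg {a b : Fin n} {s : ℤ} (hs : s = 1 ∨ s = -1) (hab : a ≠ b)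
    (h : (s : ℝ) • (eps n a - eps n b) ∈ DeltaNeg n) :
    (s = 1 ∧ b < a) ∨ (s = -1 ∧ a < b) := by
  rw [DeltaNeg, Set.mem_neg] at h
  have h' : ((-s : ℤ) : ℝ) • (eps n a - eps n b) ∈ DeltaPos n := by
    push_cast
    rw [neg_smul]
    exact h
  rcases dir_pos (s := -s) (by omega) hab h' with ⟨h1, h2⟩ | ⟨h1, h2⟩
  · exact Or.inr ⟨by omega, h2⟩
  · exact Or.inl ⟨by omega, h2⟩

end Stmt12

/-- Corollary 3.8.4: for an edge with all `ε_i β_i ∈ R` and no internal turning point, whose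
end-points do not lie in a common double component, all `ε_i` coincide and
`ε_1(ε_{x_1} − ε_{x_e}) ∈ −R_*`. -/
theorem statement_12 (n : ℕ) (hn : 2 ≤ n)
    (Jp Jm : Set (Set (Fin n)))
    (hJp : IsIntervalPartitionF n Jp) (hJm : IsIntervalPartitionF n Jm)
    (hU : piOf n Jp ∪ piOf n Jm = simpleRoots n)
    (σp σm : Fin n → Fin n)
    (hσp : ∀ t, σp (σp t) = t) (hσm : ∀ t, σm (σm t) = t)
    (e : ℕ) (x : ℕ → Fin n) (τ : ℕ → Bool)
    (hedge : IsEdge e σp σm x τ)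
    (εf : ℕ → ℤ) (hsign : SignConv e x τ εf)
    (hR : ∀ i, i + 1 < e →
      (εf i : ℝ) • (eps n (x i) - eps n (x (i + 1))) ∈ Rset n (piOf n Jp) (piOf n Jm))
    (hnoturn : ∀ i, ¬ InternalTP e x i)
    (hnocommon : ¬ ∃ Ip ∈ Jp, ∃ Im ∈ Jm,
      x 0 ∈ Ip ∧ x 0 ∈ Im ∧ x (e - 1) ∈ Ip ∧ x (e - 1) ∈ Im) :
    (∀ i j, i + 1 < e → j + 1 < e → εf i = εf j) ∧
    (εf 0 : ℝ) • (eps n (x 0) - eps n (x (e - 1)))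
      ∈ -RstarSet n (piOf n Jp) (piOf n Jm) := by
  obtain ⟨he2, hinj, htau, hstep, -, -⟩ := hedge
  have hdir : ∀ i, i + 1 < e →
      ((εf i = 1 ∧ ((τ i = true ∧ x i < x (i+1)) ∨ (τ i = false ∧ x (i+1) < x i))) ∨
       (εf i = -1 ∧ ((τ i = true ∧ x (i+1) < x i) ∨ (τ i = false ∧ x i < x (i+1))))) := by
    intro i hi
    have hne : x i ≠ x (i + 1) := Ne.symm (hstep i hi).2
    obtain ⟨hs, hpos, hneg⟩ := hsign i hi
    cases hb : τ i with
    | true =>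
        rcases Stmt12.dir_pos hs hne (hpos hb) with ⟨h1, h2⟩ | ⟨h1, h2⟩
        · exact Or.inl ⟨h1, Or.inl ⟨rfl, h2⟩⟩
        · exact Or.inr ⟨h1, Or.inl ⟨rfl, h2⟩⟩
    | false =>
        rcases Stmt12.dir_neg hs hne (hneg hb) with ⟨h1, h2⟩ | ⟨h1, h2⟩
        · exact Or.inl ⟨h1, Or.inr ⟨rfl, h2⟩⟩
        · exact Or.inr ⟨h1, Or.inr ⟨rfl, h2⟩⟩
  have key : ∀ i, i + 1 < e → (εf i = 1 ↔ (τ i = true ↔ x i < x (i+1))) := by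
    intro i hi
    rcases hdir i hi with ⟨h1, hc⟩ | ⟨h1, hc⟩
    · rw [h1]
      rcases hc with ⟨htr, hlt⟩ | ⟨hfa, hgt⟩
      · exact iff_of_true rfl (iff_of_true htr hlt)
      · refine iff_of_true rfl (iff_of_false (by simp [hfa]) (lt_asymm hgt))
    · rw [h1]
      rcases hc with ⟨htr, hgt⟩ | ⟨hfa, hlt⟩
      · refine iff_of_false (by norm_num) fun hiff => lt_asymm hgt (hiff.mp htr)
      · refine iff_of_false (by norm_num) fun hiff => by simp [hiff.mpr hlt] at hfa
  have hopp : ∀ i, i + 2 < e → (x (i+1) < x (i+2) ↔ ¬ x i < x (i+1)) := by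
    intro i hi
    have h1 : x i ≠ x (i+1) := Ne.symm (hstep i (by omega)).2
    have h2 : x (i+1) ≠ x (i+2) := Ne.symm (hstep (i+1) (by omega)).2
    have hprod : 0 ≤ (((x (i+1) : ℕ) : ℤ) - ((x i : ℕ) : ℤ)) *
        (((x (i+1) : ℕ) : ℤ) - ((x (i+2) : ℕ) : ℤ)) := by
      have hT := hnoturn (i+1)
      rw [InternalTP] at hT
      push_neg at hT
      simpa using hT (by omega) (by omega)
    have h1n : ((x i : ℕ) : ℤ) ≠ ((x (i+1) : ℕ) : ℤ) := by
      intro h; exact h1 (Fin.ext (by exact_mod_cast h))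
    have h2n : ((x (i+1) : ℕ) : ℤ) ≠ ((x (i+2) : ℕ) : ℤ) := by
      intro h; exact h2 (Fin.ext (by exact_mod_cast h))
    rw [Fin.lt_def, Fin.lt_def]
    constructor
    · intro hbc hab
      have hbc' : ((x (i+1) : ℕ) : ℤ) < ((x (i+2) : ℕ) : ℤ) := by exact_mod_cast hbc
      have hab' : ((x i : ℕ) : ℤ) < ((x (i+1) : ℕ) : ℤ) := by exact_mod_cast hab
      nlinarith [hprod]
    · intro hnab
      have hba' : ((x (i+1) : ℕ) : ℤ) < ((x i : ℕ) : ℤ) := by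
        have := Nat.le_of_not_lt hnab
        have : ((x (i+1) : ℕ) : ℤ) ≤ ((x i : ℕ) : ℤ) := by exact_mod_cast this
        omega
      by_contra hn
      have hcb' : ((x (i+2) : ℕ) : ℤ) < ((x (i+1) : ℕ) : ℤ) := by
        have := Nat.le_of_not_lt hn
        have : ((x (i+2) : ℕ) : ℤ) ≤ ((x (i+1) : ℕ) : ℤ) := by exact_mod_cast this
        omega
      nlinarith [hprod]
  have hconst : ∀ i, i + 1 < e → εf i = εf 0 := by
    intro i
    induction i with
    | zero => intro _; rfl
    | succ i ih =>
      intro hi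
      have hi' : i + 1 < e := by omega
      rw [← ih hi']
      have k1 := key i hi'
      have k2 := key (i+1) hi
      have ht := htau i (by omega)
      have ho := hopp i (by omega)
      have hs1 := (hsign i hi').1
      have hs2 := (hsign (i+1) hi).1
      have hiff : (εf (i+1) = 1) ↔ (εf i = 1) := by
        rw [k1, k2, ht, ho]
        cases τ i <;> simp <;> tauto
      rcases hs2 with h2 | h2
      · rw [h2, hiff.mp h2]
      · rcases hs1 with h1 | h1
        · exfalso; have := hiff.mpr h1; omega
        · rw [h2, h1]
  have hane : x 0 ≠ x (e-1) := by
    intro h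
    have := hinj 0 (e-1) (by omega) (by omega) h
    omega
  have htel : ∑ i ∈ Finset.range (e-1), (eps n (x i) - eps n (x (i+1)))
      = eps n (x 0) - eps n (x (e-1)) := Finset.sum_range_sub' (fun i => eps n (x i)) (e-1)
  have hsum : (εf 0 : ℝ) • (eps n (x 0) - eps n (x (e-1)))
      = ∑ i ∈ Finset.range (e-1), (εf i : ℝ) • (eps n (x i) - eps n (x (i+1))) := by
    rw [← htel, Finset.smul_sum]
    refine Finset.sum_congr rfl fun i hi => ?_
    rw [Finset.mem_range] at hi
    rw [hconst i (by omega)]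
  have hdecomp : ∃ u ∈ Nspan (piOf n Jp), ∃ v ∈ Nspan (piOf n Jm),
      (εf 0 : ℝ) • (eps n (x 0) - eps n (x (e-1))) = u - v := by
    rw [hsum]
    refine Finset.sum_induction _
      (fun w => ∃ u ∈ Nspan (piOf n Jp), ∃ v ∈ Nspan (piOf n Jm), w = u - v) ?_ ?_ ?_
    · rintro a b ⟨u1, hu1, v1, hv1, rfl⟩ ⟨u2, hu2, v2, hv2, rfl⟩
      refine ⟨u1 + u2, ?_, v1 + v2, ?_, by abel⟩
      · exact AddSubmonoid.add_mem _ hu1 hu2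
      · exact AddSubmonoid.add_mem _ hv1 hv2
    · exact ⟨0, AddSubmonoid.zero_mem _, 0, AddSubmonoid.zero_mem _, by simp⟩
    · intro i hi
      rw [Finset.mem_range] at hi
      rcases (hR i (by omega)).1 with h | h
      · exact ⟨_, h, 0, AddSubmonoid.zero_mem _, by simp⟩
      · rw [Set.mem_neg] at h
        exact ⟨0, AddSubmonoid.zero_mem _, _, h, by simp⟩
  obtain ⟨u, hu, v, hv, huv⟩ := hdecomp
  refine ⟨fun i j hi hj => (hconst i hi).trans (hconst j hj).symm, ?_⟩
  obtain ⟨hJpI, hJpcov, hJpd⟩ := hJp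
  obtain ⟨hJmI, hJmcov, hJmd⟩ := hJm
  have hs0 := (hsign 0 (by omega)).1
  have case1 : ∀ c d : Fin n, c < d →
      u - v = eps n c - eps n d →
      (∀ Ip ∈ Jp, ∀ Im ∈ Jm, c ∈ Ip → d ∈ Ip → c ∈ Im → d ∈ Im → False) →
      eps n c - eps n d ∈ -RstarSet n (piOf n Jp) (piOf n Jm) := by
    intro c d hcd huv' hnc
    obtain ⟨mem1, notmem⟩ :=
      Stmt12.main_case Jp Jm hJpd hJmd hJpcov hJmcov c d hcd u v hu hv huv' hnc
    rw [Set.mem_neg]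
    refine ⟨?_, ?_⟩
    · rw [Set.mem_neg, neg_neg]
      exact ⟨Or.inl mem1, ⟨c, d, ne_of_lt hcd, rfl⟩⟩
    · intro hM
      have h2 := hM.1.1
      rw [neg_sub] at h2
      exact notmem h2
  have case2 : ∀ c d : Fin n, c < d →
      u - v = eps n d - eps n c →
      (∀ Ip ∈ Jm, ∀ Im ∈ Jp, c ∈ Ip → d ∈ Ip → c ∈ Im → d ∈ Im → False) →
      eps n d - eps n c ∈ -RstarSet n (piOf n Jp) (piOf n Jm) := by
    intro c d hcd huv' hnc
    have huv'' : v - u = eps n c - eps n d := by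
      rw [← neg_sub u v, huv', neg_sub]
    obtain ⟨mem1, notmem⟩ :=
      Stmt12.main_case Jm Jp hJmd hJpd hJmcov hJpcov c d hcd v u hv hu huv'' hnc
    rw [Set.mem_neg]
    refine ⟨?_, ?_⟩
    · rw [Set.mem_neg, neg_neg]
      refine ⟨Or.inr ?_, ⟨d, c, (ne_of_lt hcd).symm, rfl⟩⟩
      rw [Set.mem_neg, neg_sub]
      exact mem1
    · intro hM
      have h2 := hM.1.1
      rw [neg_sub] at h2
      rcases h2 with h2 | h2
      · exact notmem (Or.inr (by rw [Set.mem_neg, neg_sub]; exact h2))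
      · rw [Set.mem_neg, neg_sub] at h2
        exact notmem (Or.inl h2)
  rcases hs0 with h0 | h0
  · have hw : (εf 0 : ℝ) • (eps n (x 0) - eps n (x (e-1)))
        = eps n (x 0) - eps n (x (e-1)) := by rw [h0]; norm_num
    rw [hw]
    rcases lt_trichotomy (x 0) (x (e-1)) with hlt | heq | hlt
    · exact case1 (x 0) (x (e-1)) hlt (by rw [← huv, hw]) fun Ip hIp Im hIm a1 a2 a3 a4 =>
        hnocommon ⟨Ip, hIp, Im, hIm, a1, a3, a2, a4⟩
    · exact absurd heq hane
    · exact case2 (x (e-1)) (x 0) hlt (by rw [← huv, hw]) fun Ip hIp Im hIm a1 a2 a3 a4 =>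
        hnocommon ⟨Im, hIm, Ip, hIp, a4, a2, a3, a1⟩
  · have hw : (εf 0 : ℝ) • (eps n (x 0) - eps n (x (e-1)))
        = eps n (x (e-1)) - eps n (x 0) := by
      rw [h0]; push_cast; rw [neg_one_smul, neg_sub]
    rw [hw]
    rcases lt_trichotomy (x 0) (x (e-1)) with hlt | heq | hlt
    · exact case2 (x 0) (x (e-1)) hlt (by rw [← huv, hw]) fun Ip hIp Im hIm a1 a2 a3 a4 =>
        hnocommon ⟨Im, hIm, Ip, hIp, a3, a1, a4, a2⟩
    · exact absurd heq hane
    · exact case1 (x (e-1)) (x 0) hlt (by rw [← huv, hw]) fun Ip hIp Im hIm a1 a2 a3 a4 =>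
        hnocommon ⟨Ip, hIp, Im, hIm, a2, a4, a1, a3⟩
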